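/- Let p ≥ 3 be an odd natural number, m ≥ 1, and let N and a be natural numbers with (p - 1) * N = p^(m+1) - 1 and (p - 1) * a = p^m - 1. Let D be a p × 2p matrix with entries in {0, 1} such that D * Dᵀ = ((p+1)/2) • I_p + ((p-3)/2) • J_p. Let O : Fin (p^(m+1)) → Fin N → Fin p be an array such that any two distinct rows of O agree in exactly a columns. Define the p^(m+1) × (N * 2p) integer matrix 𝒟 (columns indexed by Fin N × Fin (2p)) by 𝒟 i (s, t) = D (O i s) t. Then 𝒟 * 𝒟ᵀ = (p^m * (p+1) / 2) • I + (p^m * (p-1) / 2 - 1) • J, where I and J are the identity and all-ones matrices of order p^(m+1). -/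

import Mathlib

open Matrix

/-- Let `D` be the incidence matrix of the derived design
`BIBD(p, 2p, p-1, (p-1)/2, (p-3)/2)` of a symmetric `2-(2p+1, p, (p-1)/2)` design, and let
`O` be an orthogonal array on `p` symbols of dimensions `p^(m+1) × N` in which any two
distinct rows agree in exactly `a` columns, where `(p-1) * N = p^(m+1) - 1` and
`(p-1) * a = p^m - 1`.  Then the matrix `𝒟` obtained from `O` by replacing each symbol by
the corresponding row of `D` satisfies
`𝒟 * 𝒟ᵀ = (p^m (p+1)/2) • I + (p^m (p-1)/2 - 1) • J`. -/
theorem stmt_8 (p m N a : ℕ) (hp : 3 ≤ p) (hpodd : Odd p) (hm : 1 ≤ m)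
    (hN : (p - 1) * N = p ^ (m + 1) - 1) (ha : (p - 1) * a = p ^ m - 1)
    (D : Matrix (Fin p) (Fin (2 * p)) ℤ)
    (hD01 : ∀ i j, D i j = 0 ∨ D i j = 1)
    (hD : D * Dᵀ = (((p + 1) / 2 : ℕ) : ℤ) • 1 +
      (((p - 3) / 2 : ℕ) : ℤ) • (Matrix.of fun _ _ => (1 : ℤ)))
    (O : Fin (p ^ (m + 1)) → Fin N → Fin p)
    (hO : ∀ i j : Fin (p ^ (m + 1)), i ≠ j → {s : Fin N | O i s = O j s}.ncard = a) :
    (Matrix.of fun (i : Fin (p ^ (m + 1))) (s : Fin N × Fin (2 * p)) => D (O i s.1) s.2) *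
      (Matrix.of fun (i : Fin (p ^ (m + 1))) (s : Fin N × Fin (2 * p)) => D (O i s.1) s.2)ᵀ =
      ((p ^ m * (p + 1) / 2 : ℕ) : ℤ) • 1 +
        (((p ^ m * (p - 1) / 2 : ℕ) : ℤ) - 1) • (Matrix.of fun _ _ => (1 : ℤ)) := by
  obtain ⟨k, hk⟩ := hpodd
  have hk1 : 1 ≤ k := by omega
  -- nat division facts
  have e1 : (p + 1) / 2 = k + 1 := by omega
  have e2 : (p - 3) / 2 = k - 1 := by omega
  have e3 : p ^ m * (p + 1) / 2 = p ^ m * (k + 1) := by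
    rw [Nat.mul_div_assoc _ (⟨k + 1, by omega⟩ : 2 ∣ (p + 1)), e1]
  have e4 : p ^ m * (p - 1) / 2 = p ^ m * k := by
    rw [Nat.mul_div_assoc _ (⟨k, by omega⟩ : 2 ∣ (p - 1)),
      show (p - 1) / 2 = k by omega]
  have hP1 : 1 ≤ p ^ m := Nat.one_le_pow _ _ (by omega)
  have hP2 : 1 ≤ p ^ (m + 1) := Nat.one_le_pow _ _ (by omega)
  have hpc : (p : ℤ) = 2 * k + 1 := by exact_mod_cast hk
  -- integer versions of hN, ha
  have h2 : (2 * k : ℤ) * N = (2 * k + 1) * (p : ℤ) ^ m - 1 := by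
    have h := hN
    zify [hP2, show 1 ≤ p by omega] at h
    rw [pow_succ] at h
    generalize (p : ℤ) ^ m = Q at h ⊢
    rw [hpc] at h
    linarith [h]
  have h1 : (2 * k : ℤ) * a = (p : ℤ) ^ m - 1 := by
    have h := ha
    zify [hP1, show 1 ≤ p by omega] at h
    generalize (p : ℤ) ^ m = Q at h ⊢
    rw [hpc] at h
    linarith [h]
  -- entrywise
  have key : ∀ x y : Fin p, (∑ t, D x t * D y t) =
      (((p + 1) / 2 : ℕ) : ℤ) * (if x = y then 1 else 0) + (((p - 3) / 2 : ℕ) : ℤ) := by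
    intro x y
    have h := congrFun (congrFun hD x) y
    simp only [Matrix.add_apply, Matrix.smul_apply, Matrix.one_apply, Matrix.of_apply] at h
    simpa [mul_apply, transpose_apply, Matrix.add_apply, Matrix.smul_apply,
      Matrix.one_apply, smul_eq_mul, mul_ite] using h
  ext i j
  simp only [mul_apply, of_apply, transpose_apply, Fintype.sum_prod_type]
  simp only [key]
  rw [Finset.sum_add_distrib, Finset.sum_const, ← Finset.mul_sum, Finset.sum_boole]
  simp only [Matrix.add_apply, Matrix.smul_apply, Matrix.one_apply, Matrix.of_apply,
    smul_eq_mul, mul_one, Finset.card_univ, Fintype.card_fin, nsmul_eq_mul]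
  by_cases hij : i = j
  · subst hij
    rw [if_pos rfl,
      show (Finset.univ.filter fun s : Fin N => O i s = O i s) = Finset.univ from by simp,
      Finset.card_univ, Fintype.card_fin]
    push_cast [e1, e2, e3, e4, Nat.cast_sub hk1]
    linear_combination h2
  · rw [if_neg hij]
    have hcard : (Finset.univ.filter fun s => O i s = O j s).card = a := by
      rw [← hO i j hij, Set.ncard_eq_toFinset_card']
      congr 1
      ext s
      simp
    rw [hcard]
    push_cast [e1, e2, e3, e4, Nat.cast_sub hk1]
    have hk0 : (2 * (k : ℤ)) ≠ 0 := by positivity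
    apply mul_left_cancel₀ hk0
    linear_combination ((k : ℤ) + 1) * h1 + ((k : ℤ) - 1) * h2
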